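/- Let n ≥ 0 and 0 ≤ f ≤ ⌊n/2⌋ be integers. The number of 2f-tuples of positive integers (i_1, …, i_f, j_1, …, j_f) satisfying 1 ≤ i_f < i_{f−1} < ⋯ < i_1 ≤ n and i_k < j_k ≤ n − 2k + 2 for every 1 ≤ k ≤ f equals n!/((n − 2f)!·f!·2^f); equivalently, this number N satisfies N·(n − 2f)!·f!·2^f = n!. -/

import Mathlib

set_option linter.unusedVariables false
namespace S15
def iota (v x y : ℕ) : ℕ :=
  let w := if x ≤ v then v + 1 else v
  if y ≤ w then w + 1 else w

/-- relabel `v ∈ ℕ ∖ {x,y}` after removing `x,y`. -/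
def drop (v x y : ℕ) : ℕ :=
  v - (if x < v then 1 else 0) - (if y < v then 1 else 0)

lemma iota_lt_iota {v w x y : ℕ} (h : v < w) : iota v x y < iota w x y := by
  unfold iota; dsimp only; split_ifs <;> omega

lemma iota_ne_left {v x y : ℕ} (h : x < y) : iota v x y ≠ x := by
  unfold iota; dsimp only; split_ifs <;> omega

lemma iota_ne_right {v x y : ℕ} (h : x < y) : iota v x y ≠ y := by
  unfold iota; dsimp only; split_ifs <;> omega

lemma drop_iota {v x y : ℕ} (h : x < y) : drop (iota v x y) x y = v := by
  unfold iota drop; dsimp only; split_ifs <;> omega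

lemma iota_drop {v x y : ℕ} (h : x < y) (hx : v ≠ x) (hy : v ≠ y) :
    iota (drop v x y) x y = v := by
  unfold iota drop; dsimp only; split_ifs <;> omega

lemma drop_lt_drop {v w x y : ℕ} (hxy : x < y) (h : v < w) (hvx : v ≠ x) (hvy : v ≠ y)
    (hwx : w ≠ x) (hwy : w ≠ y) : drop v x y < drop w x y := by
  unfold drop; split_ifs <;> omega

lemma drop_pos {v x y : ℕ} (hx : 1 ≤ x) (hxy : x < y) (hv : 1 ≤ v) (hvx : v ≠ x)
    (hvy : v ≠ y) : 1 ≤ drop v x y := by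
  unfold drop; split_ifs <;> omega

lemma drop_le_sub2 {v x y n : ℕ} (hxy : x < y) (hyn : y ≤ n) (hv : v ≤ n) (hvx : v ≠ x)
    (hvy : v ≠ y) : drop v x y ≤ n - 2 := by
  unfold drop; split_ifs <;> omega

lemma iota_le {v x y : ℕ} : iota v x y ≤ v + 2 := by
  unfold iota; dsimp only; split_ifs <;> omega

lemma le_iota {v x y : ℕ} : v ≤ iota v x y := by
  unfold iota; dsimp only; split_ifs <;> omega

lemma lt_iota_of_le {v x y : ℕ} (h : x ≤ v) : v < iota v x y := by
  unfold iota; dsimp only; split_ifs <;> omega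

lemma iota_eq_self {v x y : ℕ} (hx : v < x) (hy : v < y) : iota v x y = v := by
  unfold iota; dsimp only; split_ifs <;> omega

lemma drop_eq_self {v x y : ℕ} (hx : v ≤ x) (hy : v ≤ y) : drop v x y = v := by
  unfold drop; split_ifs <;> omega

lemma le_drop {v x y : ℕ} (hx : x < v) (hxy : x < y) (hyv : y ≠ v) : x ≤ drop v x y := by
  unfold drop; split_ifs <;> omega

lemma drop_congr_right {v x y y' : ℕ} (h : y < v ↔ y' < v) : drop v x y = drop v x y' := by
  unfold drop; split_ifs <;> omega

/-- the key comparison lemma used for reconstructing decreasingness. -/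
lemma iota_drop_lt {v w u x y : ℕ} (hxy : x < y) (hxw : x ≤ w) (hvw : v < w) (hwu : w < u) :
    iota v x (drop y (iota w x y) (iota u x y)) < iota w x y := by
  unfold iota drop; dsimp only; split_ifs <;> omega

abbrev Tup (f : ℕ) := (Fin f → ℕ) × (Fin f → ℕ)

def Pred (n f : ℕ) (p : Tup f) : Prop :=
  (∀ k l : Fin f, k < l → p.1 l < p.1 k) ∧
  (∀ k : Fin f, 1 ≤ p.1 k) ∧
  (∀ k : Fin f, p.1 k ≤ n) ∧
  (∀ k : Fin f, p.1 k < p.2 k) ∧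
  (∀ k : Fin f, p.2 k ≤ n - 2 * (k : ℕ))

def tl {f : ℕ} (p : Tup (f + 1)) : Tup f := (Fin.tail p.1, Fin.tail p.2)

def phi : (f : ℕ) → Tup (f + 1) → Fin (f + 1) → (ℕ × ℕ) × Tup f
  | 0, p, _ => ((p.1 0, p.2 0), tl p)
  | (g+1), p, k =>
    Fin.cases ((p.1 0, p.2 0), tl p)
      (fun k' =>
        let r := phi g (tl p) k'
        let x := iota r.1.1 (p.1 0) (p.2 0)
        let y := iota r.1.2 (p.1 0) (p.2 0)
        ((x, y), (Fin.cons (drop (p.1 0) x y) r.2.1, Fin.cons (drop (p.2 0) x y) r.2.2))) k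

def psi : (f : ℕ) → ℕ × ℕ → Tup f → Tup (f + 1) × Fin (f + 1)
  | 0, e, u => ((Fin.cons e.1 u.1, Fin.cons e.2 u.2), 0)
  | (g+1), e, u =>
    if u.1 0 < e.1 then ((Fin.cons e.1 u.1, Fin.cons e.2 u.2), 0)
    else
      let A := iota (u.1 0) e.1 e.2
      let B := iota (u.2 0) e.1 e.2
      let r := psi g (drop e.1 A B, drop e.2 A B) (tl u)
      ((Fin.cons A r.1.1, Fin.cons B r.1.2), r.2.succ)

lemma phi_zero (f : ℕ) (p : Tup (f + 1)) : phi f p 0 = ((p.1 0, p.2 0), tl p) := by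
  cases f <;> simp [phi]

lemma phi_succ (g : ℕ) (p : Tup (g + 2)) (k' : Fin (g + 1)) :
    phi (g + 1) p k'.succ =
      ((iota (phi g (tl p) k').1.1 (p.1 0) (p.2 0),
        iota (phi g (tl p) k').1.2 (p.1 0) (p.2 0)),
       (Fin.cons (drop (p.1 0) (iota (phi g (tl p) k').1.1 (p.1 0) (p.2 0))
            (iota (phi g (tl p) k').1.2 (p.1 0) (p.2 0))) (phi g (tl p) k').2.1,
        Fin.cons (drop (p.2 0) (iota (phi g (tl p) k').1.1 (p.1 0) (p.2 0))
            (iota (phi g (tl p) k').1.2 (p.1 0) (p.2 0))) (phi g (tl p) k').2.2)) := by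
  simp [phi]

lemma Pred_tl {n f : ℕ} {p : Tup (f + 1)} (hp : Pred n (f + 1) p) : Pred (n - 2) f (tl p) := by
  obtain ⟨h1, h2, h3, h4, h5⟩ := hp
  refine ⟨fun k l h => h1 _ _ (by simpa using h), fun k => h2 _, fun k => ?_, fun k => h4 _,
    fun k => ?_⟩
  · have := h4 k.succ; have := h5 k.succ
    simp only [Fin.val_succ] at *
    simp only [tl, Fin.tail]; omega
  · have := h5 k.succ
    simp only [Fin.val_succ] at this
    simp only [tl, Fin.tail]; omega

lemma ne_of_dec {f : ℕ} {p : Tup f} (h1 : ∀ k l : Fin f, k < l → p.1 l < p.1 k)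
    {i j : Fin f} (hij : i ≠ j) : p.1 i ≠ p.1 j := by
  rcases lt_or_gt_of_ne hij with h | h
  · exact (h1 _ _ h).ne'
  · exact (h1 _ _ h).ne

lemma psi_pos (g : ℕ) (e : ℕ × ℕ) (u : Tup (g + 1)) (h : u.1 0 < e.1) :
    psi (g + 1) e u = ((Fin.cons e.1 u.1, Fin.cons e.2 u.2), 0) := by
  simp only [psi]; rw [if_pos h]

lemma psi_neg (g : ℕ) (e : ℕ × ℕ) (u : Tup (g + 1)) (h : ¬ u.1 0 < e.1) :
    psi (g + 1) e u =
      ((Fin.cons (iota (u.1 0) e.1 e.2)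
          (psi g (drop e.1 (iota (u.1 0) e.1 e.2) (iota (u.2 0) e.1 e.2),
                  drop e.2 (iota (u.1 0) e.1 e.2) (iota (u.2 0) e.1 e.2)) (tl u)).1.1,
        Fin.cons (iota (u.2 0) e.1 e.2)
          (psi g (drop e.1 (iota (u.1 0) e.1 e.2) (iota (u.2 0) e.1 e.2),
                  drop e.2 (iota (u.1 0) e.1 e.2) (iota (u.2 0) e.1 e.2)) (tl u)).1.2),
       (psi g (drop e.1 (iota (u.1 0) e.1 e.2) (iota (u.2 0) e.1 e.2),
               drop e.2 (iota (u.1 0) e.1 e.2) (iota (u.2 0) e.1 e.2)) (tl u)).2.succ) := by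
  simp only [psi]; rw [if_neg h]

lemma phi_spec (f : ℕ) : ∀ (n : ℕ) (p : Tup (f + 1)), Pred n (f + 1) p → ∀ (k : Fin (f + 1)),
    (phi f p k).1.1 = p.1 k ∧
    p.1 k < (phi f p k).1.2 ∧
    (phi f p k).1.2 ≤ n ∧
    (∀ m, (phi f p k).1.2 ≠ p.1 m) ∧
    (∀ l, (phi f p k).2.1 l = drop (p.1 (k.succAbove l)) (p.1 k) ((phi f p k).1.2)) ∧
    Pred (n - 2) f (phi f p k).2 ∧
    psi f (phi f p k).1 (phi f p k).2 = (p, k) := by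
  induction f with
  | zero =>
    intro n p hp k
    obtain ⟨h1, h2, h3, h4, h5⟩ := hp
    have hk : k = 0 := Fin.eq_zero k
    subst hk
    rw [phi_zero]
    have e1 : Fin.cons (p.1 0) (Fin.tail p.1) = p.1 := Fin.cons_self_tail p.1
    have e2 : Fin.cons (p.2 0) (Fin.tail p.2) = p.2 := Fin.cons_self_tail p.2
    refine ⟨rfl, h4 0, by simpa using h5 0, ?_, fun l => l.elim0, ?_, ?_⟩
    · intro m
      have hm : m = 0 := Fin.eq_zero m
      subst hm
      exact (h4 0).ne'
    · exact ⟨fun k => k.elim0, fun k => k.elim0, fun k => k.elim0, fun k => k.elim0,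
        fun k => k.elim0⟩
    · show psi 0 (p.1 0, p.2 0) (tl p) = (p, 0)
      simp only [psi, tl, e1, e2]
  | succ g IH =>
    intro n p hp k
    have hp' := hp
    obtain ⟨h1, h2, h3, h4, h5⟩ := hp'
    induction k using Fin.cases with
    | zero =>
      rw [phi_zero]
      have e1 : Fin.cons (p.1 0) (Fin.tail p.1) = p.1 := Fin.cons_self_tail p.1
      have e2 : Fin.cons (p.2 0) (Fin.tail p.2) = p.2 := Fin.cons_self_tail p.2
      refine ⟨rfl, h4 0, by simpa using h5 0, ?_, ?_, Pred_tl hp, ?_⟩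
      · intro m
        show p.2 0 ≠ p.1 m
        induction m using Fin.cases with
        | zero => exact (h4 0).ne'
        | succ m' =>
          have hlt : p.1 m'.succ < p.1 0 := h1 0 m'.succ (Fin.succ_pos m')
          have := h4 0
          omega
      · intro l
        show Fin.tail p.1 l = drop (p.1 ((0 : Fin (g + 2)).succAbove l)) (p.1 0) (p.2 0)
        rw [Fin.zero_succAbove]
        have hlt : p.1 l.succ < p.1 0 := h1 0 l.succ (Fin.succ_pos l)
        have := h4 0
        rw [drop_eq_self (by omega) (by omega)]
        rfl
      · show psi (g + 1) (p.1 0, p.2 0) (tl p) = (p, 0)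
        have htest : (tl p).1 0 < p.1 0 := h1 0 (Fin.succ 0) (Fin.succ_pos 0)
        rw [psi_pos g (p.1 0, p.2 0) (tl p) htest]
        simp only [tl, e1, e2]
    | succ k' =>
      obtain ⟨ra, rb1, rb2, rc, rd, re, rf⟩ := IH (n - 2) (tl p) (Pred_tl hp) k'
      rw [phi_succ]
      set r := phi g (tl p) k' with hrdef
      have hra : r.1.1 = p.1 k'.succ := ra
      have hrb1 : p.1 k'.succ < r.1.2 := rb1
      have h40 : p.1 0 < p.2 0 := h4 0
      have h50 : p.2 0 ≤ n := by simpa using h5 0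
      have hk'lt : p.1 k'.succ < p.1 0 := h1 0 k'.succ (Fin.succ_pos k')
      have h2k : 1 ≤ p.1 k'.succ := h2 _
      set x := iota r.1.1 (p.1 0) (p.2 0) with hxdef
      set y := iota r.1.2 (p.1 0) (p.2 0) with hydef
      have hx : x = p.1 k'.succ := by
        rw [hxdef, hra]; exact iota_eq_self hk'lt (by omega)
      have hxy : x < y := iota_lt_iota (by omega)
      have hr2le : r.1.2 ≤ n - 2 := rb2
      have hyn : y ≤ n := le_trans iota_le (by omega)
      have hya : y ≠ p.1 0 := iota_ne_left h40
      have hyb : y ≠ p.2 0 := iota_ne_right h40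
      have hrley : r.1.2 ≤ y := le_iota
      have hym : ∀ m : Fin (g + 2), y ≠ p.1 m := by
        intro m
        induction m using Fin.cases with
        | zero => exact hya
        | succ m' =>
          rcases lt_or_ge r.1.2 (p.1 0) with hc | hc
          · have hyy : y = r.1.2 := iota_eq_self hc (by omega)
            rw [hyy]; exact rc m'
          · have h' : p.1 m'.succ < p.1 0 := h1 0 m'.succ (Fin.succ_pos m')
            have := lt_iota_of_le (y := p.2 0) hc
            omega
      have hxy' : p.1 k'.succ < y := hx ▸ hxy
      have hd : ∀ l : Fin (g + 1),
          (Fin.cons (drop (p.1 0) x y) r.2.1 : Fin (g + 1) → ℕ) l =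
            drop (p.1 ((Fin.succ k').succAbove l)) (p.1 (Fin.succ k')) y := by
        intro l
        induction l using Fin.cases with
        | zero =>
          rw [Fin.cons_zero, Fin.succ_succAbove_zero, ← hx]
        | succ l' =>
          rw [Fin.cons_succ, Fin.succ_succAbove_succ]
          have hv0 : p.1 (k'.succAbove l').succ < p.1 0 :=
            h1 0 (k'.succAbove l').succ (Fin.succ_pos _)
          have hrd : r.2.1 l' = drop (p.1 (k'.succAbove l').succ) (p.1 k'.succ) r.1.2 := rd l'
          rw [hrd]
          apply drop_congr_right
          rcases lt_or_ge r.1.2 (p.1 0) with hc | hc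
          · have hyy : y = r.1.2 := iota_eq_self hc (by omega)
            omega
          · omega
      have hinj : ∀ {i j : Fin (g + 2)}, i ≠ j → p.1 i ≠ p.1 j :=
        fun {i j} hij => ne_of_dec h1 hij
      have hne_x : ∀ l : Fin (g + 1),
          p.1 ((Fin.succ k').succAbove l) ≠ p.1 (Fin.succ k') :=
        fun l => hinj (Fin.succAbove_ne _ _)
      refine ⟨hx, hxy', hyn, fun m => hym m, hd, ?_, ?_⟩
      · show Pred (n - 2) (g + 1)
          (Fin.cons (drop (p.1 0) x y) r.2.1, Fin.cons (drop (p.2 0) x y) r.2.2)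
        obtain ⟨q1, q2, q3, q4, q5⟩ := re
        refine ⟨?_, ?_, ?_, ?_, ?_⟩
        · intro i j hij
          show (Fin.cons (drop (p.1 0) x y) r.2.1 : Fin (g + 1) → ℕ) j <
            (Fin.cons (drop (p.1 0) x y) r.2.1 : Fin (g + 1) → ℕ) i
          rw [hd i, hd j]
          exact drop_lt_drop hxy' (h1 _ _ ((Fin.strictMono_succAbove _) hij))
            (hne_x j) (Ne.symm (hym _)) (hne_x i) (Ne.symm (hym _))
        · intro l
          show 1 ≤ (Fin.cons (drop (p.1 0) x y) r.2.1 : Fin (g + 1) → ℕ) l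
          rw [hd l]
          exact drop_pos h2k hxy' (h2 _) (hne_x l) (Ne.symm (hym _))
        · intro l
          show (Fin.cons (drop (p.1 0) x y) r.2.1 : Fin (g + 1) → ℕ) l ≤ n - 2
          rw [hd l]
          have := drop_le_sub2 hxy' hyn (h3 _) (hne_x l) (Ne.symm (hym _))
          omega
        · intro l
          induction l using Fin.cases with
          | zero =>
            show drop (p.1 0) x y < drop (p.2 0) x y
            exact drop_lt_drop hxy h40 (by omega) (Ne.symm hya) (by omega) (Ne.symm hyb)
          | succ l' =>
            show (Fin.cons (drop (p.1 0) x y) r.2.1 : Fin (g + 1) → ℕ) l'.succ <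
              (Fin.cons (drop (p.2 0) x y) r.2.2 : Fin (g + 1) → ℕ) l'.succ
            rw [Fin.cons_succ, Fin.cons_succ]
            exact q4 l'
        · intro l
          induction l using Fin.cases with
          | zero =>
            show drop (p.2 0) x y ≤ n - 2 - 2 * ((0 : Fin (g + 1)) : ℕ)
            have := drop_le_sub2 hxy hyn h50 (by omega) (Ne.symm hyb)
            simpa using this
          | succ l' =>
            show (Fin.cons (drop (p.2 0) x y) r.2.2 : Fin (g + 1) → ℕ) l'.succ ≤
              n - 2 - 2 * ((l'.succ : Fin (g + 1)) : ℕ)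
            rw [Fin.cons_succ]
            have := q5 l'
            simp only [Fin.val_succ]
            omega
      · show psi (g + 1) (x, y)
          (Fin.cons (drop (p.1 0) x y) r.2.1, Fin.cons (drop (p.2 0) x y) r.2.2) = (p, k'.succ)
        have htest : ¬ ((Fin.cons (drop (p.1 0) x y) r.2.1 : Fin (g + 1) → ℕ) 0 < x) := by
          rw [Fin.cons_zero]
          have := le_drop (hx ▸ hk'lt) hxy hya
          omega
        rw [psi_neg g (x, y)
          (Fin.cons (drop (p.1 0) x y) r.2.1, Fin.cons (drop (p.2 0) x y) r.2.2) htest]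
        dsimp only
        simp only [Fin.cons_zero]
        have hA : iota (drop (p.1 0) x y) x y = p.1 0 := iota_drop hxy (by omega) (Ne.symm hya)
        have hB : iota (drop (p.2 0) x y) x y = p.2 0 := iota_drop hxy (by omega) (Ne.symm hyb)
        have htl : tl (Fin.cons (drop (p.1 0) x y) r.2.1, Fin.cons (drop (p.2 0) x y) r.2.2)
            = r.2 := by
          simp only [tl, Fin.tail_cons]
        rw [hA, hB, htl]
        have hdx : drop x (p.1 0) (p.2 0) = r.1.1 := by rw [hxdef]; exact drop_iota h40
        have hdy : drop y (p.1 0) (p.2 0) = r.1.2 := by rw [hydef]; exact drop_iota h40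
        rw [hdx, hdy]
        have hre : (r.1.1, r.1.2) = r.1 := rfl
        rw [hre, rf]
        dsimp only [tl]
        rw [Fin.cons_self_tail, Fin.cons_self_tail]
lemma Pred_cons (n f : ℕ) (a b : ℕ) (u : Tup f) (hu : Pred (n - 2) f u)
    (ha1 : 1 ≤ a) (hab : a < b) (hbn : b ≤ n) (hhead : ∀ j : Fin f, u.1 j < a) :
    Pred n (f + 1) (Fin.cons a u.1, Fin.cons b u.2) := by
  obtain ⟨q1, q2, q3, q4, q5⟩ := hu
  refine ⟨?_, ?_, ?_, ?_, ?_⟩ <;> dsimp only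
  · intro i j hij
    induction j using Fin.cases with
    | zero => exact absurd hij (Fin.not_lt_zero i)
    | succ j' =>
      induction i using Fin.cases with
      | zero =>
        rw [Fin.cons_zero, Fin.cons_succ]
        exact hhead j'
      | succ i' =>
        rw [Fin.cons_succ, Fin.cons_succ]
        exact q1 i' j' (Fin.succ_lt_succ_iff.mp hij)
  · intro l
    induction l using Fin.cases with
    | zero => rw [Fin.cons_zero]; exact ha1
    | succ l' => rw [Fin.cons_succ]; exact q2 l'
  · intro l
    induction l using Fin.cases with
    | zero => rw [Fin.cons_zero]; omega
    | succ l' => rw [Fin.cons_succ]; have := q3 l'; omega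
  · intro l
    induction l using Fin.cases with
    | zero => rw [Fin.cons_zero, Fin.cons_zero]; exact hab
    | succ l' => rw [Fin.cons_succ, Fin.cons_succ]; exact q4 l'
  · intro l
    induction l using Fin.cases with
    | zero =>
      rw [Fin.cons_zero]
      simpa using hbn
    | succ l' =>
      rw [Fin.cons_succ]
      have := q5 l'
      simp only [Fin.val_succ]
      omega

lemma psi_spec (f : ℕ) : ∀ (n : ℕ) (e : ℕ × ℕ) (u : Tup f), 1 ≤ e.1 → e.1 < e.2 → e.2 ≤ n →
    Pred (n - 2) f u →
    Pred n (f + 1) (psi f e u).1 ∧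
    ((psi f e u).1.1 0 = e.1 ∨
      ∃ hf : 0 < f, (psi f e u).1.1 0 = iota (u.1 ⟨0, hf⟩) e.1 e.2) ∧
    phi f (psi f e u).1 (psi f e u).2 = (e, u) := by
  induction f with
  | zero =>
    intro n e u he1 he2 he3 hu
    refine ⟨?_, ?_, ?_⟩
    · exact Pred_cons n 0 e.1 e.2 u hu he1 he2 he3 (fun j => j.elim0)
    · refine Or.inl ?_
      show (Fin.cons e.1 u.1 : Fin 1 → ℕ) 0 = e.1
      rw [Fin.cons_zero]
    · show phi 0 (Fin.cons e.1 u.1, Fin.cons e.2 u.2) 0 = (e, u)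
      rw [phi_zero]
      simp only [tl, Fin.cons_zero, Fin.tail_cons]
  | succ g IH =>
    intro n e u he1 he2 he3 hu
    obtain ⟨q1, q2, q3, q4, q5⟩ := hu
    have hmax : ∀ j : Fin (g + 1), u.1 j ≤ u.1 0 := by
      intro j
      rcases eq_or_ne j 0 with h | h
      · rw [h]
      · exact (q1 0 j (Fin.pos_of_ne_zero h)).le
    by_cases hbr : u.1 0 < e.1
    · rw [psi_pos g e u hbr]
      refine ⟨?_, ?_, ?_⟩
      · exact Pred_cons n (g + 1) e.1 e.2 u ⟨q1, q2, q3, q4, q5⟩ he1 he2 he3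
          (fun j => lt_of_le_of_lt (hmax j) hbr)
      · refine Or.inl ?_
        show (Fin.cons e.1 u.1 : Fin (g + 2) → ℕ) 0 = e.1
        rw [Fin.cons_zero]
      · show phi (g + 1) (Fin.cons e.1 u.1, Fin.cons e.2 u.2) 0 = (e, u)
        rw [phi_zero]
        simp only [tl, Fin.cons_zero, Fin.tail_cons]
    · rw [psi_neg g e u hbr]
      dsimp only
      set A := iota (u.1 0) e.1 e.2 with hAdef
      set B := iota (u.2 0) e.1 e.2 with hBdef
      have hle : e.1 ≤ u.1 0 := not_lt.mp hbr
      have hA_gt : u.1 0 < A := lt_iota_of_le hle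
      have hAB : A < B := iota_lt_iota (q4 0)
      have q30 : u.1 0 ≤ n - 2 := q3 0
      have q50 : u.2 0 ≤ n - 2 := by simpa using q5 0
      have q20 : 1 ≤ u.1 0 := q2 0
      have hBn : B ≤ n := le_trans iota_le (by omega)
      have hAn : A ≤ n := le_trans iota_le (by omega)
      have hAne1 : A ≠ e.1 := iota_ne_left he2
      have hAne2 : A ≠ e.2 := iota_ne_right he2
      have hBne1 : B ≠ e.1 := iota_ne_left he2
      have hBne2 : B ≠ e.2 := iota_ne_right he2
      have he1A : e.1 < A := by omega
      have hde1 : drop e.1 A B = e.1 := drop_eq_self (by omega) (by omega)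
      have hd12 : drop e.1 A B < drop e.2 A B :=
        drop_lt_drop hAB he2 (Ne.symm hAne1) (Ne.symm hBne1) (Ne.symm hAne2) (Ne.symm hBne2)
      have hd2n : drop e.2 A B ≤ n - 2 :=
        drop_le_sub2 hAB hBn he3 (Ne.symm hAne2) (Ne.symm hBne2)
      obtain ⟨P, C3, RT⟩ := IH (n - 2) (drop e.1 A B, drop e.2 A B) (tl u)
        (by show 1 ≤ drop e.1 A B; omega)
        (by show drop e.1 A B < drop e.2 A B; exact hd12)
        (by show drop e.2 A B ≤ n - 2; exact hd2n)
        (Pred_tl ⟨q1, q2, q3, q4, q5⟩)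
      set r := psi g (drop e.1 A B, drop e.2 A B) (tl u) with hrdef
      have hhead : r.1.1 0 < A := by
        rcases C3 with hc | ⟨hf, hc⟩
        · rw [hc]; show drop e.1 A B < A; omega
        · rw [hc]
          show iota ((tl u).1 ⟨0, hf⟩) (drop e.1 A B) (drop e.2 A B) < A
          rw [hde1]
          have hv : (tl u).1 ⟨0, hf⟩ = u.1 (⟨0, hf⟩ : Fin g).succ := rfl
          have hvlt : u.1 (⟨0, hf⟩ : Fin g).succ < u.1 0 := q1 0 _ (Fin.succ_pos _)
          rw [hv, hAdef, hBdef]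
          exact iota_drop_lt he2 hle hvlt (q4 0)
      have hheads : ∀ j : Fin (g + 1), r.1.1 j < A := by
        intro j
        rcases eq_or_ne j 0 with h | h
        · rw [h]; exact hhead
        · exact lt_trans (P.1 0 j (Fin.pos_of_ne_zero h)) hhead
      refine ⟨?_, ?_, ?_⟩
      · have := Pred_cons n (g + 1) A B r.1 P (by omega) hAB hBn hheads
        exact this
      · refine Or.inr ⟨Nat.succ_pos g, ?_⟩
        show (Fin.cons A r.1.1 : Fin (g + 2) → ℕ) 0 = iota (u.1 ⟨0, Nat.succ_pos g⟩) e.1 e.2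
        rw [Fin.cons_zero, hAdef]
        rfl
      · show phi (g + 1) (Fin.cons A r.1.1, Fin.cons B r.1.2) r.2.succ = (e, u)
        rw [phi_succ]
        have htl : tl (Fin.cons A r.1.1, Fin.cons B r.1.2) = r.1 := by
          simp only [tl, Fin.tail_cons]
        rw [htl, RT]
        have hxhat : iota (drop e.1 A B) A B = e.1 := iota_drop hAB (Ne.symm hAne1) (Ne.symm hBne1)
        have hyhat : iota (drop e.2 A B) A B = e.2 := iota_drop hAB (Ne.symm hAne2) (Ne.symm hBne2)
        have hdropA : drop A e.1 e.2 = u.1 0 := by rw [hAdef]; exact drop_iota he2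
        have hdropB : drop B e.1 e.2 = u.2 0 := by rw [hBdef]; exact drop_iota he2
        dsimp only
        simp only [Fin.cons_zero]
        rw [hxhat, hyhat, hdropA, hdropB]
        simp only [tl, Fin.cons_self_tail, Prod.mk.eta]
def TT (n f : ℕ) := {p : Tup f // Pred n f p}
def PairsT (n : ℕ) := {e : ℕ × ℕ // 1 ≤ e.1 ∧ e.1 < e.2 ∧ e.2 ≤ n}

def keyEquiv (n f : ℕ) : TT n (f + 1) × Fin (f + 1) ≃ PairsT n × TT (n - 2) f where
  toFun q :=
    (⟨(phi f q.1.1 q.2).1, by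
        obtain ⟨c1, c2, c3, -, -, -, -⟩ := phi_spec f n q.1.1 q.1.2 q.2
        refine ⟨?_, ?_, c3⟩
        · rw [c1]; exact q.1.2.2.1 q.2
        · rw [c1]; exact c2⟩,
     ⟨(phi f q.1.1 q.2).2, (phi_spec f n q.1.1 q.1.2 q.2).2.2.2.2.2.1⟩)
  invFun z :=
    (⟨(psi f z.1.1 z.2.1).1, (psi_spec f n z.1.1 z.2.1 z.1.2.1 z.1.2.2.1 z.1.2.2.2 z.2.2).1⟩,
     (psi f z.1.1 z.2.1).2)
  left_inv q := by
    obtain ⟨⟨p, hp⟩, k⟩ := q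
    have h := (phi_spec f n p hp k).2.2.2.2.2.2
    have h1 : (psi f (phi f p k).1 (phi f p k).2).1 = p := by rw [h]
    have h2 : (psi f (phi f p k).1 (phi f p k).2).2 = k := by rw [h]
    simp only [Prod.ext_iff]
    exact ⟨Subtype.ext h1, h2⟩
  right_inv z := by
    obtain ⟨⟨e, he⟩, ⟨u, hu⟩⟩ := z
    have h := (psi_spec f n e u he.1 he.2.1 he.2.2 hu).2.2
    have h1 : (phi f (psi f e u).1 (psi f e u).2).1 = e := by rw [h]
    have h2 : (phi f (psi f e u).1 (psi f e u).2).2 = u := by rw [h]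
    simp only [Prod.ext_iff]
    exact ⟨Subtype.ext h1, Subtype.ext h2⟩

lemma card_key (n f : ℕ) :
    Nat.card (TT n (f + 1)) * (f + 1) = Nat.card (PairsT n) * Nat.card (TT (n - 2) f) := by
  have h := Nat.card_congr (keyEquiv n f)
  rwa [Nat.card_prod, Nat.card_prod, Nat.card_eq_fintype_card (α := Fin (f + 1)),
    Fintype.card_fin] at h

def pairsEquiv (n : ℕ) : PairsT n ≃ (Σ j : Fin n, Fin j.val) where
  toFun e := ⟨⟨e.1.2 - 1, by obtain ⟨h1, h2, h3⟩ := e.2; omega⟩,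
    ⟨e.1.1 - 1, by obtain ⟨h1, h2, h3⟩ := e.2; simp only; omega⟩⟩
  invFun s := ⟨(s.2.val + 1, s.1.val + 1), by
    refine ⟨by omega, by have := s.2.isLt; omega, by have := s.1.isLt; omega⟩⟩
  left_inv e := by
    obtain ⟨⟨a, b⟩, h1, h2, h3⟩ := e
    dsimp only at h1 h2 h3
    apply Subtype.ext
    simp only [Prod.ext_iff]
    constructor <;> omega
  right_inv s := rfl

lemma card_pairs (n : ℕ) : Nat.card (PairsT n) * 2 = n * (n - 1) := by
  rw [Nat.card_congr (pairsEquiv n), Nat.card_eq_fintype_card, Fintype.card_sigma]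
  simp only [Fintype.card_fin]
  rw [Fin.sum_univ_eq_sum_range (fun j => j) n]
  exact Finset.sum_range_id_mul_two n

lemma card_TT_zero (n : ℕ) : Nat.card (TT n 0) = 1 := by
  rw [Nat.card_eq_one_iff_unique]
  constructor
  · constructor
    intro a b
    apply Subtype.ext
    apply Prod.ext <;> exact Subsingleton.elim _ _
  · exact ⟨⟨(fun k => k.elim0, fun k => k.elim0),
      ⟨fun k => k.elim0, fun k => k.elim0, fun k => k.elim0, fun k => k.elim0,
       fun k => k.elim0⟩⟩⟩

lemma main (f : ℕ) : ∀ n : ℕ, 2 * f ≤ n →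
    Nat.card (TT n f) * (Nat.factorial (n - 2 * f) * Nat.factorial f * 2 ^ f)
      = Nat.factorial n := by
  induction f with
  | zero =>
    intro n _
    rw [card_TT_zero]
    simp [Nat.factorial]
  | succ f IH =>
    intro n hn
    have h2 : 2 * f ≤ n - 2 := by omega
    have hIH := IH (n - 2) h2
    have hkey := card_key n f
    have hpairs := card_pairs n
    have hA : n - 2 * (f + 1) = n - 2 - 2 * f := by omega
    rw [hA]
    have e1 : Nat.card (TT n (f + 1)) *
        (Nat.factorial (n - 2 - 2 * f) * Nat.factorial (f + 1) * 2 ^ (f + 1))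
        = (Nat.card (TT n (f + 1)) * (f + 1)) *
          (Nat.factorial (n - 2 - 2 * f) * Nat.factorial f * 2 ^ f) * 2 := by
      rw [Nat.factorial_succ]; ring
    rw [e1, hkey]
    have e2 : Nat.card (PairsT n) * Nat.card (TT (n - 2) f) *
        (Nat.factorial (n - 2 - 2 * f) * Nat.factorial f * 2 ^ f) * 2
        = (Nat.card (TT (n - 2) f) *
            (Nat.factorial (n - 2 - 2 * f) * Nat.factorial f * 2 ^ f)) *
          (Nat.card (PairsT n) * 2) := by ring
    rw [e2, hIH, hpairs]
    obtain ⟨m, rfl⟩ : ∃ m, n = m + 2 := ⟨n - 2, by omega⟩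
    simp only [Nat.add_sub_cancel]
    rw [show m + 2 - 1 = m + 1 by omega]
    have hfac : Nat.factorial (m + 2) = (m + 2) * ((m + 1) * Nat.factorial m) := by
      have h1 : m + 2 = (m + 1) + 1 := by omega
      rw [h1, Nat.factorial_succ, Nat.factorial_succ]
    rw [hfac]
    ring

end S15

/-- Let `n ≥ 0` and `0 ≤ f ≤ ⌊n/2⌋`.  The number `N` of `2f`-tuples of
positive integers `(i₁,…,i_f, j₁,…,j_f)` with `1 ≤ i_f < i_{f−1} < ⋯ < i₁ ≤ n` and
`i_k < j_k ≤ n − 2k + 2` for every `1 ≤ k ≤ f` satisfies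
`N·(n − 2f)!·f!·2^f = n!`.  (Here the tuple is encoded as a pair of functions
`a b : Fin f → ℕ`, `a k = i_{k+1}`, `b k = j_{k+1}`, `k` zero-based, so that the bound
`j_{k+1} ≤ n − 2(k+1) + 2` reads `b k ≤ n − 2k`.) -/
theorem stmt_15 (n f : ℕ) (hf : 2 * f ≤ n) :
    Nat.card {p : (Fin f → ℕ) × (Fin f → ℕ) //
        (∀ k l : Fin f, k < l → p.1 l < p.1 k) ∧
        (∀ k : Fin f, 1 ≤ p.1 k) ∧
        (∀ k : Fin f, p.1 k ≤ n) ∧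
        (∀ k : Fin f, p.1 k < p.2 k) ∧
        (∀ k : Fin f, p.2 k ≤ n - 2 * (k : ℕ))} *
      (Nat.factorial (n - 2 * f) * Nat.factorial f * 2 ^ f) = Nat.factorial n :=
  S15.main f n hf
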